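/- Suppose for some constant α > 0 there are at least 2^{αn²} distinct n-bit threshold functions, and suppose there is an injective map from distinct n-bit threshold functions to vertex-cover equivalence classes of weight functions V(G_n) → ℕ₊ on a fixed graph G_n with 2(n+1) vertices. Then for sufficiently large n, there exists a weight function h on G_n such that no weight function h' : V(G_n) → {1,…,2^{αn/3}} is vertex-cover equivalent to h. -/

import Mathlib

open Finset

/-- A set of vertices covering every edge. -/
def IsVertexCover {V : Type*} (G : SimpleGraph V) (C : Finset V) : Prop :=
  ∀ ⦃u v : V⦄, G.Adj u v → u ∈ C ∨ v ∈ C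

/-- An inclusion-minimal vertex cover. -/
def MinimalVC {V : Type*} (G : SimpleGraph V) (C : Finset V) : Prop :=
  IsVertexCover G C ∧ ∀ C' : Finset V, C' ⊂ C → ¬ IsVertexCover G C'

/-- Two weight functions are vertex-cover equivalent if they order all pairs of
inclusion-minimal vertex covers identically. -/
def VCEquiv {V : Type*} (G : SimpleGraph V) (w w' : V → ℕ) : Prop :=
  ∀ S₁ S₂ : Finset V, MinimalVC G S₁ → MinimalVC G S₂ →
    ((∑ v ∈ S₁, w v ≤ ∑ v ∈ S₂, w v) ↔ (∑ v ∈ S₁, w' v ≤ ∑ v ∈ S₂, w' v))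

/-- If there are at least `2^(αn²)` distinct `n`-bit threshold functions and
they map injectively (up to vertex-cover equivalence) to positive weight functions on a
graph `G_n` with `2(n+1)` vertices, then for all sufficiently large `n` some weight
function on `G_n` has no vertex-cover-equivalent weight function with range
`{1, …, 2^{αn/3}}`. -/
theorem stmt_11 (α : ℝ) (hα : 0 < α)
    (V : ℕ → Type) [∀ n, Fintype (V n)]
    (G : ∀ n, SimpleGraph (V n))
    (hcard : ∀ n, Fintype.card (V n) = 2 * (n + 1))
    (TF : ℕ → Type)
    (hTF : ∀ n : ℕ, (2 : ℝ) ^ (α * (n : ℝ) ^ 2) ≤ (Nat.card (TF n) : ℝ))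
    (Φ : ∀ n, TF n → (V n → ℕ))
    (hΦpos : ∀ n f v, 0 < Φ n f v)
    (hΦ : ∀ n (f g : TF n), f ≠ g → ¬ VCEquiv (G n) (Φ n f) (Φ n g)) :
    ∃ N : ℕ, ∀ n ≥ N, ∃ h : V n → ℕ, (∀ v, 0 < h v) ∧
      ∀ h' : V n → ℕ,
        (∀ v, 0 < h' v ∧ ((h' v : ℝ) ≤ (2 : ℝ) ^ (α * (n : ℝ) / 3))) →
        ¬ VCEquiv (G n) h h' := by

  obtain ⟨N₀, hN₀⟩ := exists_nat_gt (2 + 12 / α)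
  refine ⟨N₀ + 1, fun n hn => ?_⟩
  by_contra hcon
  push_neg at hcon
  -- every Φ n f is positive, so we can choose a small-range equivalent h' f
  choose h' hh'small hh'equiv using fun f => hcon (Φ n f) (hΦpos n f)
  have hTFn := hTF n
  have hposcard : 0 < Nat.card (TF n) := by
    have h2 : (0 : ℝ) < (2 : ℝ) ^ (α * (n : ℝ) ^ 2) := Real.rpow_pos_of_pos (by norm_num) _
    exact_mod_cast h2.trans_le hTFn
  haveI : Finite (TF n) := (Nat.card_pos_iff.mp hposcard).2
  set M : ℕ := Nat.floor ((2 : ℝ) ^ (α * (n : ℝ) / 3)) with hM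
  have hle : ∀ f v, h' f v < M + 1 := fun f v =>
    Nat.lt_succ_of_le (Nat.le_floor ((hh'small f v).2))
  have hinj : Function.Injective (fun f => (fun v => (⟨h' f v, hle f v⟩ : Fin (M + 1)))) := by
    intro f g hfg
    by_contra hne
    apply hΦ n f g hne
    have heq : h' f = h' g := by
      funext v
      exact congrArg Fin.val (congrFun hfg v)
    intro S₁ S₂ m1 m2
    refine (hh'equiv f S₁ S₂ m1 m2).trans ?_
    rw [heq]
    exact (hh'equiv g S₁ S₂ m1 m2).symm
  have hcount : Nat.card (TF n) ≤ (M + 1) ^ (2 * (n + 1)) := by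
    calc Nat.card (TF n) ≤ Nat.card (V n → Fin (M + 1)) :=
          Nat.card_le_card_of_injective _ hinj
      _ = (M + 1) ^ (2 * (n + 1)) := by
          rw [Nat.card_fun, Nat.card_eq_fintype_card, Nat.card_eq_fintype_card,
            Fintype.card_fin, hcard n]
  -- real bounds
  have hn3 : 0 ≤ α * (n : ℝ) / 3 := by positivity
  have hone : (1 : ℝ) ≤ (2 : ℝ) ^ (α * (n : ℝ) / 3) :=
    Real.one_le_rpow (by norm_num) hn3
  have hMle : ((M : ℝ) + 1) ≤ (2 : ℝ) ^ (α * (n : ℝ) / 3 + 1) := by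
    rw [Real.rpow_add (by norm_num), Real.rpow_one]
    have : (M : ℝ) ≤ (2 : ℝ) ^ (α * (n : ℝ) / 3) := Nat.floor_le (by positivity)
    linarith
  have hpow : (((M + 1) ^ (2 * (n + 1)) : ℕ) : ℝ) ≤
      (2 : ℝ) ^ ((α * (n : ℝ) / 3 + 1) * (2 * ((n : ℝ) + 1))) := by
    push_cast
    calc ((M : ℝ) + 1) ^ (2 * (n + 1)) ≤
          ((2 : ℝ) ^ (α * (n : ℝ) / 3 + 1)) ^ (2 * (n + 1)) :=
          pow_le_pow_left₀ (by positivity) hMle _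
      _ = (2 : ℝ) ^ ((α * (n : ℝ) / 3 + 1) * (2 * ((n : ℝ) + 1))) := by
          rw [← Real.rpow_natCast ((2 : ℝ) ^ (α * (n : ℝ) / 3 + 1)), ← Real.rpow_mul (by norm_num)]
          push_cast
          ring_nf
  have hnlarge : (2 : ℝ) + 12 / α < (n : ℝ) := by
    have : (N₀ : ℝ) ≤ (n : ℝ) := by exact_mod_cast Nat.le_of_succ_le hn
    linarith
  have hexp : (α * (n : ℝ) / 3 + 1) * (2 * ((n : ℝ) + 1)) < α * (n : ℝ) ^ 2 := by
    have h1 : α * ((n : ℝ) - 2) > 12 := by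
      have := mul_lt_mul_of_pos_left hnlarge hα
      rw [mul_add] at this
      have h12 : α * (12 / α) = 12 := by field_simp
      nlinarith
    have hn1 : (1 : ℝ) ≤ (n : ℝ) := by
      have : (1 : ℕ) ≤ n := le_trans (Nat.le_add_left 1 N₀) hn
      exact_mod_cast this
    nlinarith [mul_pos hα (lt_of_lt_of_le zero_lt_one hn1), sq_nonneg ((n:ℝ) - 2)]
  have hfinal : (2 : ℝ) ^ (α * (n : ℝ) ^ 2) < (2 : ℝ) ^ (α * (n : ℝ) ^ 2) := by
    calc (2 : ℝ) ^ (α * (n : ℝ) ^ 2) ≤ (Nat.card (TF n) : ℝ) := hTFn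
      _ ≤ (((M + 1) ^ (2 * (n + 1)) : ℕ) : ℝ) := by exact_mod_cast hcount
      _ ≤ (2 : ℝ) ^ ((α * (n : ℝ) / 3 + 1) * (2 * ((n : ℝ) + 1))) := hpow
      _ < (2 : ℝ) ^ (α * (n : ℝ) ^ 2) :=
          Real.rpow_lt_rpow_of_exponent_lt (by norm_num) hexp
  exact absurd hfinal (lt_irrefl _)
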